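/- Suppose all products of A_{-1}, A_0, A_1 are entrywise finite. Define G = Σ_{n≥1} Σ_{i_{(n)} ∈ I_{D,1,n}} A_{i_1}⋯A_{i_n} (values in [0,∞]). Then G satisfies the matrix quadratic equation G = A_{-1} + A_0 G + A_1 G², where both sides are computed in [0,∞] (equality holds even when both sides are infinite). -/

import Mathlib

open scoped ENNReal
open Classical

abbrev Mx := ℕ → ℕ → ℝ≥0∞

noncomputable def mprod (A B : Mx) : Mx := fun i j => ∑' k, A i k * B k j

def isPM1 (L : List ℤ) : Prop := ∀ x ∈ L, x = -1 ∨ x = 0 ∨ x = 1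

/-- `I_{D,m,n}` with `n = L.length`. -/
def ID (m : ℕ) (L : List ℤ) : Prop :=
  isPM1 L ∧ (∀ k, 1 ≤ k → k ≤ L.length - 1 → -(m : ℤ) + 1 ≤ (L.take k).sum) ∧
    L.sum = -(m : ℤ)

/-- `I_n`: partial sums nonnegative and total sum `0`. -/
def IFlat (L : List ℤ) : Prop :=
  isPM1 L ∧ (∀ k, 1 ≤ k → k ≤ L.length - 1 → 0 ≤ (L.take k).sum) ∧ L.sum = 0

/-- `I_{U,1,n}`: partial sums `≥ 1` and total sum `1`. -/
def IU (L : List ℤ) : Prop :=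
  isPM1 L ∧ (∀ k, 1 ≤ k → k ≤ L.length - 1 → 1 ≤ (L.take k).sum) ∧ L.sum = 1

/-- The matrix associated with an index in `{-1,0,1}`. -/
noncomputable def pick (Am1 A0 A1 : Mx) (x : ℤ) : Mx :=
  if x = -1 then Am1 else if x = 0 then A0 else A1

/-- Product `A_{i₁} A_{i₂} ⋯ A_{i_n}` along an index sequence. -/
noncomputable def seqProd (Am1 A0 A1 : Mx) : List ℤ → Mx
  | [] => fun i j => if i = j then 1 else 0
  | x :: L => mprod (pick Am1 A0 A1 x) (seqProd Am1 A0 A1 L)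

/-! ### Auxiliary lemmas -/

section Aux

lemma my_mprod_id_left (B : Mx) : mprod (fun i j => if i = j then 1 else 0) B = B := by
  funext i j
  unfold mprod
  have h : ∀ k, (if i = k then (1 : ℝ≥0∞) else 0) * B k j = if k = i then B i j else 0 := by
    intro k
    rcases eq_or_ne k i with rfl | h
    · simp
    · rw [if_neg fun hik => h hik.symm, zero_mul, if_neg h]
  rw [tsum_congr h, tsum_ite_eq]

lemma my_mprod_id_right (A : Mx) : mprod A (fun i j => if i = j then 1 else 0) = A := by
  funext i j
  unfold mprod
  have h : ∀ k, A i k * (if k = j then (1 : ℝ≥0∞) else 0) = if k = j then A i j else 0 := by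
    intro k
    by_cases h : k = j <;> simp [h]
  rw [tsum_congr h, tsum_ite_eq]

lemma my_mprod_assoc (A B C : Mx) : mprod (mprod A B) C = mprod A (mprod B C) := by
  funext i j
  unfold mprod
  calc ∑' m, (∑' k, A i k * B k m) * C m j
      = ∑' m, ∑' k, A i k * B k m * C m j := by
        refine tsum_congr fun m => ?_
        rw [← ENNReal.tsum_mul_right]
    _ = ∑' k, ∑' m, A i k * B k m * C m j := ENNReal.tsum_comm
    _ = ∑' k, A i k * ∑' m, B k m * C m j := by
        refine tsum_congr fun k => ?_
        rw [← ENNReal.tsum_mul_left]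
        exact tsum_congr fun m => by ring

lemma my_seqProd_append (Am1 A0 A1 : Mx) (L1 L2 : List ℤ) :
    seqProd Am1 A0 A1 (L1 ++ L2) = mprod (seqProd Am1 A0 A1 L1) (seqProd Am1 A0 A1 L2) := by
  induction L1 with
  | nil => simpa [seqProd] using (my_mprod_id_left (seqProd Am1 A0 A1 L2)).symm
  | cons x L ih =>
    show seqProd Am1 A0 A1 (x :: (L ++ L2)) = _
    rw [seqProd, ih, ← my_mprod_assoc]
    rfl

lemma my_pick_neg_one (Am1 A0 A1 : Mx) : pick Am1 A0 A1 (-1) = Am1 := by simp [pick]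

lemma my_pick_zero (Am1 A0 A1 : Mx) : pick Am1 A0 A1 0 = A0 := by norm_num [pick]

lemma my_pick_one (Am1 A0 A1 : Mx) : pick Am1 A0 A1 1 = A1 := by norm_num [pick]

lemma my_mprod_tsum_right {ι : Type*} (A : Mx) (F : ι → Mx) (i j : ℕ) :
    mprod A (fun a b => ∑' t, F t a b) i j = ∑' t, mprod A (F t) i j := by
  unfold mprod
  calc ∑' k, A i k * ∑' t, F t k j
      = ∑' k, ∑' t, A i k * F t k j := tsum_congr fun k => ENNReal.tsum_mul_left.symm
    _ = ∑' t, ∑' k, A i k * F t k j := ENNReal.tsum_comm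

lemma my_mprod_tsum_left {ι : Type*} (F : ι → Mx) (B : Mx) (i j : ℕ) :
    mprod (fun a b => ∑' t, F t a b) B i j = ∑' t, mprod (F t) B i j := by
  unfold mprod
  calc ∑' k, (∑' t, F t i k) * B k j
      = ∑' k, ∑' t, F t i k * B k j := tsum_congr fun k => ENNReal.tsum_mul_right.symm
    _ = ∑' t, ∑' k, F t i k * B k j := ENNReal.tsum_comm

lemma my_tsum_sum_type {α β : Type*} (f : α ⊕ β → ℝ≥0∞) :
    ∑' x, f x = (∑' a, f (Sum.inl a)) + ∑' b, f (Sum.inr b) := by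
  have h1 : ∑' (x : ↑(Set.range (Sum.inl : α → α ⊕ β))), f x = ∑' a, f (Sum.inl a) :=
    ((Equiv.ofInjective Sum.inl Sum.inl_injective).tsum_eq fun x => f x.1).symm
  have h2 : ∑' (x : ↑(Set.range (Sum.inr : β → α ⊕ β))), f x = ∑' b, f (Sum.inr b) :=
    ((Equiv.ofInjective Sum.inr Sum.inr_injective).tsum_eq fun x => f x.1).symm
  rw [← h1, ← h2, ← Summable.tsum_union_disjoint Set.isCompl_range_inl_range_inr.disjoint
    ENNReal.summable ENNReal.summable]
  rw [Set.range_inl_union_range_inr, tsum_univ]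

lemma my_tsum_unit (c : ℝ≥0∞) : ∑' _ : Unit, c = c := by
  rw [tsum_eq_single () fun b hb => absurd rfl hb]

/-! ### Combinatorics of `ID 1` -/

lemma ID1_ne_nil {L : List ℤ} (h : ID 1 L) : L ≠ [] := by
  rintro rfl
  have := h.2.2
  norm_num at this

lemma ID1_length_pos {L : List ℤ} (h : ID 1 L) : 1 ≤ L.length :=
  List.length_pos_iff.2 (ID1_ne_nil h)

lemma ID1_neg1 : ID 1 [-1] := by
  refine ⟨?_, ?_, by norm_num⟩
  · intro x hx; simp at hx; tauto
  · intro k hk hk'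
    simp only [List.length_cons, List.length_nil] at hk'
    omega

lemma ID1_take_ge {L : List ℤ} (h : ID 1 L) (k : ℕ) : -1 ≤ (L.take k).sum := by
  rcases Nat.eq_zero_or_pos k with rfl | hk
  · simp
  by_cases hlen : L.length ≤ k
  · rw [List.take_of_length_le hlen]
    have := h.2.2
    omega
  · have := h.2.1 k hk (by omega)
    omega

lemma ID1_take_nonneg {L : List ℤ} (h : ID 1 L) (k : ℕ) (hk : k ≤ L.length - 1) :
    0 ≤ (L.take k).sum := by
  rcases Nat.eq_zero_or_pos k with rfl | hk0
  · simp
  have := h.2.1 k hk0 hk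
  omega

lemma ID1_cons_zero {L : List ℤ} (h : ID 1 L) : ID 1 (0 :: L) := by
  obtain ⟨h1, h2, h3⟩ := h
  refine ⟨?_, ?_, by simpa using h3⟩
  · intro x hx
    rcases List.mem_cons.1 hx with rfl | hx
    · tauto
    · exact h1 x hx
  · intro k hk hk'
    simp only [List.length_cons] at hk'
    match k, hk with
    | (k' + 1), _ =>
      rw [List.take_succ_cons, List.sum_cons]
      rcases Nat.eq_zero_or_pos k' with rfl | hk0
      · simp
      · have := h2 k' hk0 (by omega)
        omega

lemma ID1_cons_one {L1 L2 : List ℤ} (h1 : ID 1 L1) (h2 : ID 1 L2) :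
    ID 1 (1 :: (L1 ++ L2)) := by
  have n1 := ID1_length_pos h1
  have n2 := ID1_length_pos h2
  refine ⟨?_, ?_, ?_⟩
  · intro x hx
    simp only [List.mem_cons, List.mem_append] at hx
    rcases hx with rfl | hx | hx
    · tauto
    · exact h1.1 x hx
    · exact h2.1 x hx
  · intro k hk hk'
    simp only [List.length_cons, List.length_append] at hk'
    match k, hk with
    | (k' + 1), _ =>
      rw [List.take_succ_cons, List.sum_cons, List.take_append, List.sum_append]
      have a1 : -1 ≤ (L1.take k').sum := ID1_take_ge h1 k'
      have a2 : 0 ≤ (L2.take (k' - L1.length)).sum := ID1_take_nonneg h2 _ (by omega)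
      omega
  · rw [List.sum_cons, List.sum_append, h1.2.2, h2.2.2]
    norm_num

lemma my_exists_prefix_sum (L : List ℤ) (h : ∀ x ∈ L, -1 ≤ x) (t : ℤ)
    (h1 : L.sum ≤ t) (h2 : t ≤ 0) : ∃ k ≤ L.length, (L.take k).sum = t := by
  induction L generalizing t with
  | nil =>
    refine ⟨0, Nat.zero_le _, ?_⟩
    simp only [List.sum_nil] at h1
    simpa using le_antisymm h2 h1 |>.symm
  | cons x L ih =>
    by_cases ht : t = 0
    · exact ⟨0, Nat.zero_le _, by simp [ht]⟩
    · have hx : -1 ≤ x := h x (by simp)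
      have hsum : L.sum ≤ t - x := by
        rw [List.sum_cons] at h1; omega
      obtain ⟨k, hk, hs⟩ := ih (fun y hy => h y (by simp [hy])) (t - x) hsum (by omega)
      refine ⟨k + 1, by simpa using hk, ?_⟩
      rw [List.take_succ_cons, List.sum_cons, hs]
      ring

lemma ID1_cases {L : List ℤ} (h : ID 1 L) :
    L = [-1] ∨ (∃ L', ID 1 L' ∧ L = 0 :: L') ∨
      (∃ L1 L2, ID 1 L1 ∧ ID 1 L2 ∧ L = 1 :: (L1 ++ L2)) := by
  obtain ⟨h1, h2, h3⟩ := h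
  cases L with
  | nil => norm_num at h3
  | cons x L' =>
    rcases h1 x (by simp) with rfl | rfl | rfl
    · -- head -1
      left
      cases L' with
      | nil => rfl
      | cons y L'' =>
        exfalso
        have := h2 1 le_rfl (by simp)
        norm_num at this
    · -- head 0
      right; left
      refine ⟨L', ⟨?_, ?_, ?_⟩, rfl⟩
      · intro y hy; exact h1 y (by simp [hy])
      · intro k hk hk'
        have := h2 (k + 1) (by omega) (by simp only [List.length_cons]; omega)
        rw [List.take_succ_cons, List.sum_cons] at this
        omega
      · rw [List.sum_cons] at h3; omega
    · -- head 1
      right; right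
      have hsum' : L'.sum = -2 := by rw [List.sum_cons] at h3; omega
      have hL'len : 1 ≤ L'.length := by
        rcases L' with _ | ⟨y, L''⟩
        · norm_num at hsum'
        · simp
      have hge : ∀ j, j ≤ L'.length - 1 → -1 ≤ (L'.take j).sum := by
        intro j hj
        rcases Nat.eq_zero_or_pos j with rfl | hj0
        · simp
        have := h2 (j + 1) (by omega) (by simp only [List.length_cons]; omega)
        rw [List.take_succ_cons, List.sum_cons] at this
        omega
      have hexP : ∃ k, (L'.take k).sum = -1 := by
        obtain ⟨k, hk1, hk2⟩ := my_exists_prefix_sum L'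
          (fun y hy => by rcases h1 y (by simp [hy]) with rfl | rfl | rfl <;> norm_num)
          (-1) (by omega) (by omega)
        exact ⟨k, hk2⟩
      have hexle : ∃ k, k ≤ L'.length ∧ (L'.take k).sum = -1 := by
        obtain ⟨k, hk⟩ := hexP
        refine ⟨min k L'.length, min_le_right _ _, ?_⟩
        rcases le_total k L'.length with h | h
        · rwa [min_eq_left h]
        · rw [min_eq_right h, List.take_length, ← List.take_of_length_le h, hk]
      set m := Nat.find hexP with hm
      have hmspec : (L'.take m).sum = -1 := Nat.find_spec hexP
      have hmmin : ∀ j < m, (L'.take j).sum ≠ -1 := fun j hj => Nat.find_min hexP hj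
      have hmle : m ≤ L'.length := by
        obtain ⟨k, hk1, hk2⟩ := hexle
        exact le_trans (Nat.find_min' hexP hk2) hk1
      have hmpos : 1 ≤ m := by
        rcases Nat.eq_zero_or_pos m with h0 | h0
        · exfalso; rw [h0] at hmspec; norm_num at hmspec
        · exact h0
      have hmlt : m < L'.length := by
        rcases lt_or_eq_of_le hmle with hlt | heq
        · exact hlt
        · exfalso
          rw [heq, List.take_length] at hmspec
          omega
      have hdsum : (L'.drop m).sum = -1 := by
        have hsplit : (L'.take m).sum + (L'.drop m).sum = L'.sum := by
          rw [← List.sum_append, List.take_append_drop]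
        omega
      refine ⟨L'.take m, L'.drop m, ⟨?_, ?_, ?_⟩, ⟨?_, ?_, ?_⟩, by
        rw [List.take_append_drop]⟩
      · intro y hy; exact h1 y (by simp [List.take_subset m L' hy])
      · intro k hk hk'
        have hlen : (L'.take m).length = m := by rw [List.length_take]; omega
        rw [hlen] at hk'
        rw [List.take_take, min_eq_left (by omega : k ≤ m)]
        have hg := hge k (by omega)
        have hn := hmmin k (by omega)
        omega
      · have hlen : (L'.take m).length = m := by rw [List.length_take]; omega
        simp only [hmspec]; norm_num
      · intro y hy; exact h1 y (by simp [List.drop_subset m L' hy])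
      · intro k hk hk'
        rw [List.length_drop] at hk'
        have htk : L'.take (m + k) = L'.take m ++ (L'.drop m).take k := List.take_add (l := L') (i := m) (j := k)
        have hg := hge (m + k) (by omega)
        rw [htk, List.sum_append] at hg
        omega
      · simpa using hdsum

lemma my_prefix_eq {L1 L2 L1' L2' : List ℤ} (h1 : ID 1 L1) (h1' : ID 1 L1')
    (hle : L1.length ≤ L1'.length) (he : L1 ++ L2 = L1' ++ L2') : L1 = L1' := by
  have hp : L1 = L1'.take L1.length := by
    calc L1 = (L1 ++ L2).take L1.length := (List.take_left (l₁ := L1) (l₂ := L2)).symm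
      _ = (L1' ++ L2').take L1.length := by rw [he]
      _ = L1'.take L1.length := List.take_append_of_le_length hle
  have heq : L1.length = L1'.length := by
    by_contra hne
    have hlt : L1.length < L1'.length := lt_of_le_of_ne hle hne
    have h01 : 1 ≤ L1.length := ID1_length_pos h1
    have hnn := h1'.2.1 L1.length h01 (by omega)
    rw [← hp] at hnn
    have := h1.2.2
    omega
  rw [hp, heq, List.take_length]

lemma my_split_unique {L1 L2 L1' L2' : List ℤ} (h1 : ID 1 L1) (h1' : ID 1 L1')
    (he : L1 ++ L2 = L1' ++ L2') : L1 = L1' ∧ L2 = L2' := by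
  have hL : L1 = L1' := by
    rcases le_total L1.length L1'.length with h | h
    · exact my_prefix_eq h1 h1' h he
    · exact (my_prefix_eq h1' h1 h he.symm).symm
  subst hL
  exact ⟨rfl, List.append_cancel_left he⟩

/-! ### The decomposition equivalence -/

abbrev myS := {L : List ℤ // ID 1 L}

def myToFun : Unit ⊕ myS ⊕ myS × myS → myS
  | .inl _ => ⟨[-1], ID1_neg1⟩
  | .inr (.inl L) => ⟨0 :: L.1, ID1_cons_zero L.2⟩
  | .inr (.inr p) => ⟨1 :: (p.1.1 ++ p.2.1), ID1_cons_one p.1.2 p.2.2⟩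

lemma myToFun_bij : Function.Bijective myToFun := by
  constructor
  · rintro (u | L | p) (u' | L' | p') h <;>
      simp only [myToFun, Subtype.mk.injEq] at h
    · rfl
    · exact absurd (List.head_eq_of_cons_eq h) (by norm_num)
    · exact absurd (List.head_eq_of_cons_eq h) (by norm_num)
    · exact absurd (List.head_eq_of_cons_eq h) (by norm_num)
    · exact congrArg (Sum.inr ∘ Sum.inl) (Subtype.ext (List.tail_eq_of_cons_eq h))
    · exact absurd (List.head_eq_of_cons_eq h) (by norm_num)
    · exact absurd (List.head_eq_of_cons_eq h) (by norm_num)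
    · exact absurd (List.head_eq_of_cons_eq h) (by norm_num)
    · have h2 := List.tail_eq_of_cons_eq h
      obtain ⟨ha, hb⟩ := my_split_unique p.1.2 p'.1.2 h2
      have : p = p' := Prod.ext (Subtype.ext ha) (Subtype.ext hb)
      rw [this]
  · rintro ⟨L, hL⟩
    rcases ID1_cases hL with hc | ⟨L', hL', rfl⟩ | ⟨La, Lb, ha, hb, rfl⟩
    · exact ⟨.inl (), Subtype.ext hc.symm⟩
    · exact ⟨.inr (.inl ⟨L', hL'⟩), rfl⟩
    · exact ⟨.inr (.inr (⟨La, ha⟩, ⟨Lb, hb⟩)), rfl⟩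

noncomputable def myEquiv : (Unit ⊕ myS ⊕ myS × myS) ≃ myS :=
  Equiv.ofBijective myToFun myToFun_bij

end Aux

/-- `G = Σ_{n≥1} Σ_{i_{(n)} ∈ I_{D,1,n}} A_{i₁}⋯A_{i_n}` satisfies
`G = A₋₁ + A₀ G + A₁ G²`, with both sides computed in `[0,∞]`. -/
theorem stmt5 (Am1 A0 A1 : Mx)
    (hfin : ∀ L : List ℤ, isPM1 L → ∀ i j, seqProd Am1 A0 A1 L i j ≠ ⊤)
    (G : Mx)
    (hG : G = fun i j => ∑' L : {L : List ℤ // ID 1 L}, seqProd Am1 A0 A1 L.1 i j) :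
    ∀ i j, G i j = Am1 i j + mprod A0 G i j + mprod A1 (mprod G G) i j := by
  subst hG
  set P : List ℤ → Mx := seqProd Am1 A0 A1 with hP
  have hPcons : ∀ (x : ℤ) (L : List ℤ), P (x :: L) = mprod (pick Am1 A0 A1 x) (P L) :=
    fun x L => rfl
  intro i j
  -- right-hand side pieces
  have hGG : mprod (fun a b => ∑' L : myS, P L.1 a b) (fun a b => ∑' L : myS, P L.1 a b)
      = fun a b => ∑' p : myS × myS, P (p.1.1 ++ p.2.1) a b := by
    funext a b
    rw [my_mprod_tsum_left]
    refine (tsum_congr fun L1 : myS =>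
      my_mprod_tsum_right (P L1.1) (fun L : myS => P L.1) a b).trans ?_
    rw [← ENNReal.tsum_prod]
    refine tsum_congr fun p => ?_
    rw [hP, ← my_seqProd_append]
  have hA0 : mprod A0 (fun a b => ∑' L : myS, P L.1 a b) i j
      = ∑' L : myS, P (0 :: L.1) i j := by
    rw [my_mprod_tsum_right]
    exact tsum_congr fun L => by rw [hPcons, my_pick_zero]
  have hA1 : mprod A1 (mprod (fun a b => ∑' L : myS, P L.1 a b)
        (fun a b => ∑' L : myS, P L.1 a b)) i j
      = ∑' p : myS × myS, P (1 :: (p.1.1 ++ p.2.1)) i j := by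
    rw [hGG, my_mprod_tsum_right]
    exact tsum_congr fun p => by rw [hPcons, my_pick_one]
  have hAm1 : Am1 i j = P [-1] i j := by
    rw [show ([-1] : List ℤ) = [(-1 : ℤ)] from rfl, hPcons, hP, seqProd,
      my_mprod_id_right, my_pick_neg_one]
  -- left-hand side decomposition
  have hL : ∑' L : myS, P L.1 i j
      = P [-1] i j + ((∑' L : myS, P (0 :: L.1) i j)
          + ∑' p : myS × myS, P (1 :: (p.1.1 ++ p.2.1)) i j) := by
    rw [← myEquiv.tsum_eq fun L : myS => P L.1 i j]
    rw [my_tsum_sum_type, my_tsum_sum_type]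
    congr 1
    · exact my_tsum_unit _
  show (∑' L : myS, P L.1 i j) = _
  rw [hL, hA0, hA1, hAm1, add_assoc]
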